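/- Let (x, y, s) be feasible for the primal-dual pair (Ax = b, x ≥ 0; Aᵀy + s = c, s ≥ 0), ∇ > 1 a scaling factor, and (x̂, ŷ, ŝ) a ζ̂-optimal solution of the refining problem min ∇sᵀx̂ s.t. Ax̂ = 0, x̂ ≥ -∇x (with dual Aᵀŷ + ŝ = ∇s, ŝ ≥ 0), meaning Ax̂ = 0, x̂ ≥ -∇x, Aᵀŷ + ŝ = ∇s, ŝ ≥ 0, and (x̂ + ∇x)ᵀŝ ≤ ζ̂. Then xʳ = x + x̂/∇, yʳ = y + ŷ/∇, sʳ = c - Aᵀyʳ is feasible for the original pair and satisfies (xʳ)ᵀsʳ ≤ ζ̂/∇². -/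

import Mathlib

open Matrix

/-- a `ζ̂`-optimal solution of the refining problem yields a
`ζ̂/∇²`-optimal feasible solution of the original primal-dual pair. -/
theorem stmt_11 (m n : ℕ)
    (A : Matrix (Fin m) (Fin n) ℝ) (b : Fin m → ℝ) (c : Fin n → ℝ)
    (x xh xr sr s sh : Fin n → ℝ) (y yh yr : Fin m → ℝ)
    (nab zh : ℝ) (hnab : 1 < nab) (hzh : 0 ≤ zh)
    -- feasibility of (x, y, s) for the original pair
    (hPx : A.mulVec x = b) (hx0 : ∀ i, 0 ≤ x i)
    (hDy : Aᵀ.mulVec y + s = c) (hs0 : ∀ i, 0 ≤ s i)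
    -- ζ̂-optimality of (x̂, ŷ, ŝ) for the refining problem
    (hPxh : A.mulVec xh = 0) (hxh : ∀ i, -(nab * x i) ≤ xh i)
    (hDyh : Aᵀ.mulVec yh + sh = nab • s) (hsh0 : ∀ i, 0 ≤ sh i)
    (hgap : (xh + nab • x) ⬝ᵥ sh ≤ zh)
    -- the refined solution
    (hxr : xr = x + nab⁻¹ • xh) (hyr : yr = y + nab⁻¹ • yh)
    (hsr : sr = c - Aᵀ.mulVec yr) :
    A.mulVec xr = b ∧ (∀ i, 0 ≤ xr i) ∧
      Aᵀ.mulVec yr + sr = c ∧ (∀ i, 0 ≤ sr i) ∧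
      xr ⬝ᵥ sr ≤ zh / nab ^ 2 := by
  have hnab0 : (0:ℝ) < nab := lt_trans one_pos hnab
  have hnabne : nab ≠ 0 := ne_of_gt hnab0
  have hAyh : Aᵀ.mulVec yh = nab • s - sh := by rw [← hDyh]; abel
  have hc : c = Aᵀ.mulVec y + s := hDy.symm
  have hsr' : sr = nab⁻¹ • sh := by
    rw [hsr, hyr, mulVec_add, mulVec_smul, hAyh]
    funext i
    simp [hc, smul_sub, Pi.smul_apply, smul_eq_mul]
    field_simp
    ring
  have hxr' : xr = nab⁻¹ • (xh + nab • x) := by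
    rw [hxr]; funext i
    simp [Pi.smul_apply, smul_eq_mul, mul_add]
    field_simp
    ring
  refine ⟨?_, ?_, ?_, ?_, ?_⟩
  · rw [hxr, mulVec_add, mulVec_smul, hPxh, hPx]; simp
  · intro i
    rw [hxr']
    have h1 := hxh i
    have h2 : 0 ≤ xh i + nab * x i := by linarith
    simpa [Pi.smul_apply, smul_eq_mul] using
      mul_nonneg (le_of_lt (inv_pos.mpr hnab0)) h2
  · rw [hsr]; abel
  · intro i
    rw [hsr']
    simpa [Pi.smul_apply, smul_eq_mul] using
      mul_nonneg (le_of_lt (inv_pos.mpr hnab0)) (hsh0 i)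
  · rw [hxr', hsr', smul_dotProduct, dotProduct_smul, smul_eq_mul, smul_eq_mul]
    have hinv : 0 ≤ nab⁻¹ := le_of_lt (inv_pos.mpr hnab0)
    have h2 : nab⁻¹ * (nab⁻¹ * ((xh + nab • x) ⬝ᵥ sh)) ≤ nab⁻¹ * (nab⁻¹ * zh) :=
      mul_le_mul_of_nonneg_left (mul_le_mul_of_nonneg_left hgap hinv) hinv
    have h3 : nab⁻¹ * (nab⁻¹ * zh) = zh / nab ^ 2 := by rw [div_eq_mul_inv, sq, mul_inv]; ring
    linarith
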